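/- For every integer w ≥ 2 and every positive integer N, the N×N matrix over ℚ with entries C_{st} for 1 ≤ s, t ≤ N is invertible, and every entry of its inverse is an integer. -/

import Mathlib

open Finset

/-- Number of distinct prime factors of `n`. -/
def omegaN (n : ℕ) : ℕ := n.primeFactors.card

/-- `I(n)`: divisors `k` of `n` such that `n/k` is squarefree. -/
def Iset (n : ℕ) : Finset ℕ := n.divisors.filter (fun k => Squarefree (n / k))

/-- The matrix entry `C_{st}` (depending on `w`). -/
noncomputable def Cmat (w s t : ℕ) : ℚ :=
  if t ∣ s then
    ((-1 : ℚ) ^ (s * w) / ((s / t : ℕ) : ℚ) ^ 2) *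
      ∑ k ∈ Iset (s / t),
        (-1 : ℚ) ^ (omegaN (s / (k * t))) * (-1 : ℚ) ^ (k * t * w) *
          (Nat.choose (k * (t * w - 1) - 1) (k - 1) : ℚ)
  else 0

namespace CmatAux

open scoped Nat

/-- The basic integer summand. -/
def hfun (n k : ℕ) : ℤ := (-1) ^ (k * n) * (Nat.choose (k * (n - 1) - 1) (k - 1))

/-- Truncated expansion of a product of shifted factors. -/
lemma prod_add_expand (s : Finset ℕ) (x : ℤ) :
    ∃ R : ℤ, ∏ i ∈ s, (x + (i : ℤ)) =
      (∏ i ∈ s, (i : ℤ)) + x * (∑ i ∈ s, ∏ j ∈ s.erase i, (j : ℤ)) + x ^ 2 * R := by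
  classical
  induction s using Finset.induction_on with
  | empty => exact ⟨0, by simp⟩
  | @insert a s ha ih =>
    obtain ⟨R, hR⟩ := ih
    refine ⟨(∑ i ∈ s, ∏ j ∈ s.erase i, (j : ℤ)) + (a : ℤ) * R + x * R, ?_⟩
    have he : ∑ i ∈ insert a s, ∏ j ∈ (insert a s).erase i, (j : ℤ)
        = (∏ i ∈ s, (i : ℤ)) + (a : ℤ) * ∑ i ∈ s, ∏ j ∈ s.erase i, (j : ℤ) := by
      rw [Finset.sum_insert ha, Finset.erase_insert ha, Finset.mul_sum]
      congr 1
      refine Finset.sum_congr rfl fun i hi => ?_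
      have hia : a ≠ i := fun h => ha (h ▸ hi)
      rw [Finset.erase_insert_of_ne hia,
        Finset.prod_insert (fun h => ha (Finset.erase_subset _ _ h))]
    rw [Finset.prod_insert ha, Finset.prod_insert ha, hR, he]
    ring

lemma fact_eq (c m : ℕ) : (c + m)! = c ! * ∏ i ∈ Ico 1 (m + 1), (c + i) := by
  induction m with
  | zero => simp
  | succ m ih =>
    rw [Finset.prod_Ico_succ_top (Nat.le_add_left 1 m), ← mul_assoc, ← ih, ← add_assoc,
      Nat.factorial_succ, mul_comm]

lemma choose_mul_eq_prod (c m : ℕ) :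
    Nat.choose (c + m) m * m ! = ∏ i ∈ Ico 1 (m + 1), (c + i) := by
  have h := Nat.choose_mul_factorial_mul_factorial (Nat.le_add_left m c)
  have h2 : c + m - m = c := by omega
  rw [h2] at h
  have h3 : c ! * (Nat.choose (c + m) m * m !) = c ! * ∏ i ∈ Ico 1 (m + 1), (c + i) := by
    rw [← fact_eq, ← h]; ring
  exact Nat.eq_of_mul_eq_mul_left (Nat.factorial_pos c) h3

lemma filter_dvd_eq_image (p k : ℕ) (hp : 0 < p) :
    (Ico 1 (p * k)).filter (fun i => p ∣ i) = (Ico 1 k).image (fun i => p * i) := by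
  ext i
  simp only [Finset.mem_filter, Finset.mem_Ico, Finset.mem_image]
  constructor
  · rintro ⟨⟨h1, h2⟩, c, rfl⟩
    refine ⟨c, ⟨?_, ?_⟩, rfl⟩
    · have : c ≠ 0 := by rintro rfl; simp at h1
      omega
    · exact lt_of_mul_lt_mul_left h2 (by omega)
  · rintro ⟨c, ⟨h1, h2⟩, rfl⟩
    exact ⟨⟨Nat.mul_pos hp h1, mul_lt_mul_of_pos_left h2 hp⟩, c, rfl⟩

lemma prod_split (p k : ℕ) (hp : 0 < p) (f : ℕ → ℕ) :
    ∏ i ∈ Ico 1 (p * k), f i =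
      (∏ i ∈ (Ico 1 (p * k)).filter (fun i => ¬ p ∣ i), f i) * ∏ i ∈ Ico 1 k, f (p * i) := by
  rw [← Finset.prod_filter_mul_prod_filter_not (Ico 1 (p * k)) (fun i => p ∣ i) f,
    filter_dvd_eq_image p k hp, Finset.prod_image (fun a _ b _ h =>
      Nat.eq_of_mul_eq_mul_left hp h), mul_comm]

/-- The key product identity. -/
lemma key_identity (p k N : ℕ) (hp : 2 ≤ p) (hk : 1 ≤ k) (hN : 1 ≤ N) :
    Nat.choose (p * k * N - 1) (p * k - 1) *
        ∏ i ∈ (Ico 1 (p * k)).filter (fun i => ¬ p ∣ i), i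
      = Nat.choose (k * N - 1) (k - 1) *
        ∏ i ∈ (Ico 1 (p * k)).filter (fun i => ¬ p ∣ i), (p * (k * (N - 1)) + i) := by
  have hp0 : 0 < p := by omega
  set D := k * (N - 1) with hD
  set F := (Ico 1 (p * k)).filter (fun i => ¬ p ∣ i) with hF
  have hpk1 : 1 ≤ p * k := Nat.mul_pos hp0 hk
  have hkN : k * N = k * (N - 1) + k := by
    cases N with
    | zero => omega
    | succ n => rw [Nat.succ_sub_one, Nat.mul_succ]
  have hDk : p * k * N = p * D + p * k := by
    rw [mul_assoc, hkN, hD, Nat.mul_add]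
  have e1 : p * k * N - 1 = p * D + (p * k - 1) := by omega
  have e2 : k * N - 1 = D + (k - 1) := by omega
  have hA : Nat.choose (p * k * N - 1) (p * k - 1) * (p * k - 1)!
      = ∏ i ∈ Ico 1 (p * k), (p * D + i) := by
    rw [e1]
    have := choose_mul_eq_prod (p * D) (p * k - 1)
    rwa [Nat.sub_add_cancel (by omega : 1 ≤ _)] at this
  have hB : Nat.choose (k * N - 1) (k - 1) * (k - 1)! = ∏ i ∈ Ico 1 k, (D + i) := by
    rw [e2]
    have := choose_mul_eq_prod D (k - 1)
    rwa [Nat.sub_add_cancel (by omega : 1 ≤ _)] at this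
  have hfac : (p * k - 1)! = (∏ i ∈ F, i) * (p ^ (k - 1) * (k - 1)!) := by
    have h1 : ∏ i ∈ Ico 1 (p * k), i = (∏ i ∈ F, i) * ∏ i ∈ Ico 1 k, (p * i) :=
      prod_split p k hp0 id
    have h2 : ∏ i ∈ Ico 1 k, (p * i) = p ^ (k - 1) * (k - 1)! := by
      rw [Finset.prod_mul_distrib, Finset.prod_const, Nat.card_Ico]
      congr 1
      have := Finset.prod_Ico_id_eq_factorial (k - 1)
      rwa [Nat.sub_add_cancel (by omega : 1 ≤ _)] at this
    have h3 : (p * k - 1)! = ∏ i ∈ Ico 1 (p * k), i := by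
      have := Finset.prod_Ico_id_eq_factorial (p * k - 1)
      rw [Nat.sub_add_cancel (by omega : 1 ≤ _)] at this
      exact this.symm
    rw [h3, h1, h2]
  have hprod : ∏ i ∈ Ico 1 (p * k), (p * D + i)
      = (∏ i ∈ F, (p * D + i)) * (p ^ (k - 1) * ∏ i ∈ Ico 1 k, (D + i)) := by
    have h1 := prod_split p k hp0 (fun i => p * D + i)
    have h2 : ∏ i ∈ Ico 1 k, (p * D + p * i) = p ^ (k - 1) * ∏ i ∈ Ico 1 k, (D + i) := by
      have hx : ∀ i, p * D + p * i = p * (D + i) := fun i => by ring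
      simp_rw [hx]
      rw [Finset.prod_mul_distrib, Finset.prod_const, Nat.card_Ico]
    rw [h1, h2]
  have main : (Nat.choose (p * k * N - 1) (p * k - 1) * ∏ i ∈ F, i) * (p ^ (k - 1) * (k - 1)!)
      = (Nat.choose (k * N - 1) (k - 1) * ∏ i ∈ F, (p * D + i)) * (p ^ (k - 1) * (k - 1)!) := by
    calc (Nat.choose (p * k * N - 1) (p * k - 1) * ∏ i ∈ F, i) * (p ^ (k - 1) * (k - 1)!)
        = Nat.choose (p * k * N - 1) (p * k - 1) * ((∏ i ∈ F, i) * (p ^ (k - 1) * (k - 1)!)) := by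
          ring
      _ = Nat.choose (p * k * N - 1) (p * k - 1) * (p * k - 1)! := by rw [← hfac]
      _ = ∏ i ∈ Ico 1 (p * k), (p * D + i) := hA
      _ = (∏ i ∈ F, (p * D + i)) * (p ^ (k - 1) * ∏ i ∈ Ico 1 k, (D + i)) := hprod
      _ = (∏ i ∈ F, (p * D + i)) * (p ^ (k - 1) * (Nat.choose (k * N - 1) (k - 1) * (k - 1)!)) := by
            rw [hB]
      _ = (Nat.choose (k * N - 1) (k - 1) * ∏ i ∈ F, (p * D + i)) * (p ^ (k - 1) * (k - 1)!) := by
            ring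
  have hpos : 0 < p ^ (k - 1) * (k - 1)! :=
    Nat.mul_pos (Nat.pow_pos hp0) (Nat.factorial_pos _)
  exact Nat.eq_of_mul_eq_mul_right hpos main

lemma phi_mem {p k : ℕ} {i : ℕ}
    (hi : i ∈ (Ico 1 (p * k)).filter (fun i => ¬ p ∣ i)) :
    p * k - i ∈ (Ico 1 (p * k)).filter (fun i => ¬ p ∣ i) := by
  simp only [Finset.mem_filter, Finset.mem_Ico] at hi ⊢
  obtain ⟨⟨h1, h2⟩, h3⟩ := hi
  refine ⟨⟨by omega, by omega⟩, fun hdvd => h3 ?_⟩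
  have hi' : i = p * k - (p * k - i) := by omega
  rw [hi']
  exact Nat.dvd_sub (Dvd.intro k rfl) hdvd

/-- Antisymmetry of complementary subproducts modulo `p ^ a` when `p ^ a ∣ p * k`. -/
lemma G_neg {p k : ℕ} (hp : p.Prime) {a : ℕ} (hA : p ^ a ∣ p * k) {i : ℕ}
    (hi : i ∈ (Ico 1 (p * k)).filter (fun i => ¬ p ∣ i)) :
    (∏ j ∈ ((Ico 1 (p * k)).filter (fun i => ¬ p ∣ i)).erase (p * k - i), (j : ZMod (p ^ a)))
      = - ∏ j ∈ ((Ico 1 (p * k)).filter (fun i => ¬ p ∣ i)).erase i, (j : ZMod (p ^ a)) := by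
  haveI : NeZero (p ^ a) := ⟨pow_ne_zero _ hp.ne_zero⟩
  set F := (Ico 1 (p * k)).filter (fun i => ¬ p ∣ i) with hF
  have hmem : p * k - i ∈ F := phi_mem hi
  have h1 : (i : ZMod (p ^ a)) * ∏ j ∈ F.erase i, (j : ZMod (p ^ a))
      = ∏ j ∈ F, (j : ZMod (p ^ a)) := Finset.mul_prod_erase F _ hi
  have h2 : ((p * k - i : ℕ) : ZMod (p ^ a)) * ∏ j ∈ F.erase (p * k - i), (j : ZMod (p ^ a))
      = ∏ j ∈ F, (j : ZMod (p ^ a)) := Finset.mul_prod_erase F _ hmem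
  have hile : i ≤ p * k := by
    simp only [hF, Finset.mem_filter, Finset.mem_Ico] at hi; omega
  have hcast : ((p * k - i : ℕ) : ZMod (p ^ a)) = - (i : ZMod (p ^ a)) := by
    rw [Nat.cast_sub hile]
    have h0 : ((p * k : ℕ) : ZMod (p ^ a)) = 0 := (ZMod.natCast_eq_zero_iff _ _).mpr hA
    push_cast at h0 ⊢
    rw [h0, zero_sub]
  have hunit : IsUnit (i : ZMod (p ^ a)) := by
    rw [ZMod.isUnit_iff_coprime]
    have hpi : ¬ p ∣ i := by
      simp only [hF, Finset.mem_filter] at hi; exact hi.2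
    exact Nat.Coprime.pow_right a ((hp.coprime_iff_not_dvd).mpr hpi).symm
  have key : (i : ZMod (p ^ a)) * (∏ j ∈ F.erase (p * k - i), (j : ZMod (p ^ a))
      + ∏ j ∈ F.erase i, (j : ZMod (p ^ a))) = 0 := by
    rw [mul_add, h1, ← h2, hcast]; ring
  exact eq_neg_of_add_eq_zero_left ((hunit.mul_right_eq_zero).mp key)

/-- The divisibility of the near-top elementary symmetric function. -/
lemma e_dvd {p k : ℕ} (hp : p.Prime) (a : ℕ) (hA : p ^ a ∣ p * k)
    (hcase : p ≠ 2 ∨ 2 ∣ k) :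
    ((p : ℤ) ^ a) ∣ ∑ i ∈ (Ico 1 (p * k)).filter (fun i => ¬ p ∣ i),
      ∏ j ∈ ((Ico 1 (p * k)).filter (fun i => ¬ p ∣ i)).erase i, (j : ℤ) := by
  haveI : NeZero (p ^ a) := ⟨pow_ne_zero _ hp.ne_zero⟩
  have hcast : ((p : ℤ) ^ a) = ((p ^ a : ℕ) : ℤ) := by push_cast; ring
  rw [hcast, ← ZMod.intCast_zmod_eq_zero_iff_dvd]
  push_cast
  refine Finset.sum_involution (fun i _ => p * k - i) ?_ ?_ ?_ ?_
  · intro i hi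
    show (∏ j ∈ ((Ico 1 (p * k)).filter (fun i => ¬ p ∣ i)).erase i, (j : ZMod (p ^ a)))
      + (∏ j ∈ ((Ico 1 (p * k)).filter (fun i => ¬ p ∣ i)).erase (p * k - i),
          (j : ZMod (p ^ a))) = 0
    rw [G_neg hp hA hi]
    exact add_neg_cancel _
  · intro i hi _
    show p * k - i ≠ i
    simp only [Finset.mem_filter, Finset.mem_Ico] at hi
    obtain ⟨⟨h1, h2⟩, h3⟩ := hi
    intro heq
    have h2i : 2 * i = p * k := by omega
    rcases hcase with hp2 | hk2
    · rcases Nat.even_or_odd k with hek | hok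
      · obtain ⟨c, hc⟩ := hek
        apply h3
        have hpc : p * k = 2 * (p * c) := by rw [hc]; ring
        have : i = p * c := by omega
        exact this ▸ Dvd.intro c rfl
      · have hodd : Odd (p * k) := (hp.odd_of_ne_two hp2).mul hok
        obtain ⟨c, hc⟩ := hodd; omega
    · obtain ⟨c, hc⟩ := hk2
      apply h3
      have hpc : p * k = 2 * (p * c) := by rw [hc]; ring
      have : i = p * c := by omega
      exact this ▸ Dvd.intro c rfl
  · intro i hi; exact phi_mem hi
  · intro i hi
    show p * k - (p * k - i) = i
    simp only [Finset.mem_filter, Finset.mem_Ico] at hi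
    omega

lemma F_two_eq (k : ℕ) :
    (Ico 1 (2 * k)).filter (fun i => ¬ (2:ℕ) ∣ i) = (range k).image (fun j => 2 * j + 1) := by
  ext i
  simp only [Finset.mem_filter, Finset.mem_Ico, Finset.mem_image, Finset.mem_range]
  constructor
  · rintro ⟨⟨h1, h2⟩, h3⟩
    exact ⟨i / 2, by omega, by omega⟩
  · rintro ⟨j, hj, rfl⟩
    exact ⟨⟨by omega, by omega⟩, by omega⟩

lemma card_F_two (k : ℕ) : ((Ico 1 (2 * k)).filter (fun i => ¬ (2:ℕ) ∣ i)).card = k := by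
  rw [F_two_eq, Finset.card_image_of_injective _ (fun a b h => by omega), Finset.card_range]

lemma e_odd {k : ℕ} (hk : ¬ 2 ∣ k) :
    ¬ (2:ℤ) ∣ ∑ i ∈ (Ico 1 (2 * k)).filter (fun i => ¬ (2:ℕ) ∣ i),
      ∏ j ∈ ((Ico 1 (2 * k)).filter (fun i => ¬ (2:ℕ) ∣ i)).erase i, (j : ℤ) := by
  set F := (Ico 1 (2 * k)).filter (fun i => ¬ (2:ℕ) ∣ i) with hF
  intro hdvd
  have h0 : ((∑ i ∈ F, ∏ j ∈ F.erase i, (j : ℤ) : ℤ) : ZMod 2) = 0 :=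
    (ZMod.intCast_zmod_eq_zero_iff_dvd _ 2).mpr (by exact_mod_cast hdvd)
  have h1 : ((∑ i ∈ F, ∏ j ∈ F.erase i, (j : ℤ) : ℤ) : ZMod 2) = 1 := by
    push_cast
    have hterm : ∀ i ∈ F, ∏ j ∈ F.erase i, ((j:ℕ) : ZMod 2) = 1 := by
      intro i _
      apply Finset.prod_eq_one
      intro j hj
      have hj' : ¬ (2:ℕ) ∣ j := (Finset.mem_filter.mp (Finset.mem_of_mem_erase hj)).2
      have hj2 : j % 2 = 1 := by omega
      rw [← ZMod.natCast_mod, hj2, Nat.cast_one]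
    rw [Finset.sum_congr rfl hterm, Finset.sum_const, hF, card_F_two, nsmul_eq_mul, mul_one]
    have hk2 : k % 2 = 1 := by omega
    rw [← ZMod.natCast_mod, hk2, Nat.cast_one]
  rw [h0] at h1
  exact one_ne_zero h1.symm

/-- Key congruence: `hfun n (p*k) ≡ hfun n k mod p^(2 v_p(p k))`. -/
theorem step1 (p k n : ℕ) (hp : p.Prime) (hk : 0 < k) (hn : 2 ≤ n) :
    ((p : ℤ)) ^ (2 * ((p * k).factorization p)) ∣ hfun n (p * k) - hfun n k := by
  classical
  have hk0 : k ≠ 0 := by omega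
  set a := (p * k).factorization p with ha
  have hpk0 : p * k ≠ 0 := Nat.mul_ne_zero hp.ne_zero hk0
  have hApk : p ^ a ∣ p * k := Nat.ordProj_dvd _ _
  have hN1 : 1 ≤ n - 1 := by omega
  set F := (Ico 1 (p * k)).filter (fun i => ¬ p ∣ i) with hF
  set D := k * (n - 1 - 1) with hD
  set C₁ := (Nat.choose (p * k * (n - 1) - 1) (p * k - 1) : ℤ) with hC₁
  set C₂ := (Nat.choose (k * (n - 1) - 1) (k - 1) : ℤ) with hC₂
  set Pz := ∏ i ∈ F, (i : ℤ) with hPz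
  set e := ∑ i ∈ F, ∏ j ∈ F.erase i, (j : ℤ) with he
  set x := ((p : ℤ)) * ((D : ℕ) : ℤ) with hx
  have hid : C₁ * Pz = C₂ * ∏ i ∈ F, (x + (i : ℤ)) := by
    have hkey := congrArg (Nat.cast : ℕ → ℤ) (key_identity p k (n - 1) hp.two_le hk hN1)
    push_cast at hkey
    rw [hC₁, hC₂, hPz, hx]
    convert hkey using 2
    simp only [hF, hD, Nat.cast_mul]
  obtain ⟨R, hR⟩ := prod_add_expand F x
  have hPco : ∀ b : ℕ, Nat.Coprime (p ^ b) (∏ i ∈ F, i) := by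
    intro b
    apply Nat.Coprime.pow_left
    apply Nat.Coprime.prod_right
    intro i hi
    exact (hp.coprime_iff_not_dvd).mpr (Finset.mem_filter.mp hi).2
  have hPzco : ∀ b : ℕ, IsCoprime ((p:ℤ) ^ b) Pz := by
    intro b
    have h := (Nat.isCoprime_iff_coprime).mpr (hPco b)
    push_cast at h
    rwa [hPz]
  have cancel : ∀ (b : ℕ) (X : ℤ), ((p:ℤ)^b ∣ X * Pz) → ((p:ℤ)^b ∣ X) :=
    fun b X hdvd => (hPzco b).dvd_of_dvd_mul_right hdvd
  have hxN : (p ^ a : ℕ) ∣ p * D := hApk.trans ⟨n - 1 - 1, by rw [hD]; ring⟩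
  have hxdvd : ((p:ℤ))^a ∣ x := by
    have := Int.natCast_dvd_natCast.mpr hxN
    push_cast at this
    rwa [hx]
  by_cases hcase : p ≠ 2 ∨ 2 ∣ k
  · -- uniform case
    have hediv := e_dvd hp a hApk hcase
    rw [← hF, ← he] at hediv
    have hC : (p:ℤ)^(2*a) ∣ C₁ - C₂ := by
      apply cancel
      have heq : (C₁ - C₂) * Pz = C₂ * (x * e + x ^ 2 * R) := by
        rw [sub_mul, hid, hR]; ring
      rw [heq]
      apply Dvd.dvd.mul_left
      apply dvd_add
      · rw [two_mul, pow_add]; exact mul_dvd_mul hxdvd hediv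
      · rw [two_mul, pow_add, sq]
        exact Dvd.dvd.mul_right (mul_dvd_mul hxdvd hxdvd) R
    have hsg : ((-1:ℤ))^(p*k*n) = (-1)^(k*n) := by
      rcases Nat.even_or_odd (k * n) with hkn | hkn
      · rw [Even.neg_one_pow hkn, Even.neg_one_pow (by rw [mul_assoc]; exact hkn.mul_left p)]
      · have hpodd : Odd p := by
          rcases hcase with h2 | h2
          · exact hp.odd_of_ne_two h2
          · exfalso
            have hko := (Nat.odd_mul.mp hkn).1
            obtain ⟨c, hc⟩ := hko
            omega
        rw [Odd.neg_one_pow hkn, Odd.neg_one_pow (by rw [mul_assoc]; exact hpodd.mul hkn)]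
    have hgoal : hfun n (p*k) - hfun n k = (-1:ℤ)^(k*n) * (C₁ - C₂) := by
      simp only [hfun, hC₁, hC₂]
      rw [hsg]; ring
    rw [hgoal]
    exact hC.mul_left _
  · -- p = 2, k odd
    push_neg at hcase
    obtain ⟨hp2, hk2⟩ := hcase
    subst hp2
    have ha1 : a = 1 := by
      rw [ha, Nat.factorization_mul two_ne_zero hk0, Finsupp.add_apply,
        Nat.Prime.factorization_self Nat.prime_two, Nat.factorization_eq_zero_of_not_dvd hk2]
    rw [ha1]
    have hsg1 : ((-1:ℤ))^(2*k*n) = 1 := Even.neg_one_pow ⟨k*n, by ring⟩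
    rcases Nat.even_or_odd (n - 1) with hNe | hNo
    · -- n - 1 even hence n odd : sign -1, need 4 ∣ C₁ + C₂
      have hnodd : Odd n := by
        obtain ⟨c, hc⟩ := hNe
        exact Nat.odd_iff.mpr (by omega)
      have hsg2 : ((-1:ℤ))^(k*n) = -1 :=
        Odd.neg_one_pow ((Nat.odd_mul).mpr ⟨Nat.odd_iff.mpr (by omega), hnodd⟩)
      have hDodd : ¬ (2:ℕ) ∣ D := by
        rw [hD]
        intro hdd
        rcases (Nat.Prime.dvd_mul Nat.prime_two).mp hdd with h | h
        · exact hk2 h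
        · obtain ⟨c, hc⟩ := hNe; omega
      have heodd := e_odd hk2
      rw [← hF, ← he] at heodd
      have hPzNat : Pz = ((∏ i ∈ F, i : ℕ) : ℤ) := by rw [hPz]; push_cast; rfl
      have hPodd : ¬ (2:ℤ) ∣ Pz := by
        intro hdd
        have h2P : ¬ (2:ℕ) ∣ ∏ i ∈ F, i :=
          (Nat.prime_two.coprime_iff_not_dvd).mp (by simpa using hPco 1)
        apply h2P
        rw [hPzNat] at hdd
        exact_mod_cast hdd
      have hEv : Even (Pz + (D:ℤ) * e) := by
        apply Odd.add_odd
        · rw [Int.odd_iff]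
          exact Int.two_dvd_ne_zero.mp hPodd
        · apply Odd.mul
          · rw [Int.odd_coe_nat]
            exact Nat.odd_iff.mpr (by omega)
          · rw [Int.odd_iff]
            exact Int.two_dvd_ne_zero.mp heodd
      have hC : (2:ℤ)^2 ∣ C₁ + C₂ := by
        apply cancel 2
        have heq : (C₁ + C₂) * Pz = C₂ * (2 * (Pz + (D:ℤ) * e) + x ^ 2 * R) := by
          rw [add_mul, hid, hR, hx]; ring
        rw [heq]
        apply Dvd.dvd.mul_left
        apply dvd_add
        · obtain ⟨c, hc⟩ := hEv
          exact ⟨c, by rw [hc]; ring⟩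
        · exact ⟨(D:ℤ)^2 * R, by rw [hx]; ring⟩
      have hgoal : hfun n (2*k) - hfun n k = C₁ + C₂ := by
        simp only [hfun, hC₁, hC₂]
        rw [hsg1, hsg2]; ring
      rw [hgoal]
      simpa using hC
    · -- n - 1 odd hence n even : sign +1, and 4 ∣ x
      have hneven : Even n := by
        obtain ⟨c, hc⟩ := hNo
        exact Nat.even_iff.mpr (by omega)
      have hsg2 : ((-1:ℤ))^(k*n) = 1 := Even.neg_one_pow (hneven.mul_left k)
      have h4x : (2:ℤ)^2 ∣ x := by
        obtain ⟨c, hc⟩ := hNo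
        have hD2 : D = 2 * (k * c) := by
          rw [hD]
          have hnc : n - 1 - 1 = 2 * c := by omega
          rw [hnc]; ring
        refine ⟨(k * c : ℕ), ?_⟩
        rw [hx, hD2]
        push_cast
        ring
      have hC : (2:ℤ)^2 ∣ C₁ - C₂ := by
        apply cancel 2
        have heq : (C₁ - C₂) * Pz = C₂ * (x * e + x ^ 2 * R) := by
          rw [sub_mul, hid, hR]; ring
        rw [heq]
        apply Dvd.dvd.mul_left
        apply dvd_add
        · exact h4x.mul_right e
        · exact (h4x.trans (dvd_pow_self x two_ne_zero)).mul_right R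
      have hgoal : hfun n (2*k) - hfun n k = C₁ - C₂ := by
        simp only [hfun, hC₁, hC₂]
        rw [hsg1, hsg2]; ring
      rw [hgoal]
      simpa using hC

/-- The Möbius-type sum. -/
def Sint (n m : ℕ) : ℤ :=
  ∑ d ∈ m.divisors, (ArithmeticFunction.moebius d : ℤ) * hfun n (m / d)

theorem step2 (m n : ℕ) (hm : 0 < m) (hn : 2 ≤ n) : ((m : ℤ)) ^ 2 ∣ Sint n m := by
  classical
  set S := Sint n m with hS0
  have key : ∀ q : ℕ, q.Prime → q ∣ m → ((q : ℤ)) ^ (2 * m.factorization q) ∣ S := by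
    intro q hq hqm
    set a := m.factorization q with ha2
    set m₂ := m / q with hm₂
    have hm₂0 : m₂ ≠ 0 := by
      rw [hm₂]
      exact (Nat.div_pos (Nat.le_of_dvd hm hqm) hq.pos).ne'
    have hmeq : m = q * m₂ := (Nat.mul_div_cancel' hqm).symm
    have hm0 : m ≠ 0 := by omega
    have hre : ∑ d ∈ m.divisors.filter (fun d => q ∣ d),
          (ArithmeticFunction.moebius d : ℤ) * hfun n (m / d)
        = ∑ e ∈ m₂.divisors, (ArithmeticFunction.moebius (q * e) : ℤ) * hfun n (m / (q * e)) := by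
      apply Finset.sum_nbij' (fun d => d / q) (fun e => q * e)
      · intro d hd
        simp only [Finset.mem_filter, Nat.mem_divisors] at hd
        obtain ⟨⟨hdm, _⟩, hqd⟩ := hd
        obtain ⟨c, rfl⟩ := hqd
        rw [Nat.mul_div_cancel_left c hq.pos]
        refine Nat.mem_divisors.mpr ⟨?_, hm₂0⟩
        rw [hmeq] at hdm
        exact (Nat.mul_dvd_mul_iff_left hq.pos).mp hdm
      · intro e he
        simp only [Nat.mem_divisors] at he
        refine Finset.mem_filter.mpr ⟨Nat.mem_divisors.mpr ⟨?_, hm0⟩, Dvd.intro e rfl⟩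
        rw [hmeq]
        exact Nat.mul_dvd_mul_left q he.1
      · intro d hd
        simp only [Finset.mem_filter, Nat.mem_divisors] at hd
        obtain ⟨c, rfl⟩ := hd.2
        rw [Nat.mul_div_cancel_left c hq.pos]
      · intro e _
        rw [Nat.mul_div_cancel_left e hq.pos]
      · intro d hd
        simp only [Finset.mem_filter, Nat.mem_divisors] at hd
        obtain ⟨c, rfl⟩ := hd.2
        rw [Nat.mul_div_cancel_left c hq.pos]
    have hfe : m.divisors.filter (fun d => ¬ q ∣ d) = m₂.divisors.filter (fun d => ¬ q ∣ d) := by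
      ext d
      simp only [Finset.mem_filter, Nat.mem_divisors]
      constructor
      · rintro ⟨⟨hdm, _⟩, hnd⟩
        refine ⟨⟨?_, hm₂0⟩, hnd⟩
        have hco : d.Coprime q := ((hq.coprime_iff_not_dvd).mpr hnd).symm
        rw [hmeq] at hdm
        exact hco.dvd_of_dvd_mul_left hdm
      · rintro ⟨⟨hdm, _⟩, hnd⟩
        exact ⟨⟨hdm.trans ⟨q, by rw [hmeq]; ring⟩, hm0⟩, hnd⟩
    have hzero : ∑ e ∈ m₂.divisors.filter (fun d => q ∣ d),
        (ArithmeticFunction.moebius (q * e) : ℤ) * hfun n (m / (q * e)) = 0 := by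
      apply Finset.sum_eq_zero
      intro e he
      simp only [Finset.mem_filter] at he
      obtain ⟨c, rfl⟩ := he.2
      have hnsf : ¬ Squarefree (q * (q * c)) := by
        intro hsf
        exact hq.prime.not_unit (hsf q ⟨c, by ring⟩)
      rw [ArithmeticFunction.moebius_eq_zero_of_not_squarefree hnsf]
      norm_num
    have hSsum : S = ∑ e ∈ m₂.divisors.filter (fun d => ¬ q ∣ d),
        ((ArithmeticFunction.moebius (q * e) : ℤ) * hfun n (m / (q * e))
          + (ArithmeticFunction.moebius e : ℤ) * hfun n (m / e)) := by
      rw [Finset.sum_add_distrib]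
      have h1 := Finset.sum_filter_add_sum_filter_not m.divisors (fun d => q ∣ d)
        (fun d => (ArithmeticFunction.moebius d : ℤ) * hfun n (m / d))
      have h2 := Finset.sum_filter_add_sum_filter_not m₂.divisors (fun d => q ∣ d)
        (fun e => (ArithmeticFunction.moebius (q * e) : ℤ) * hfun n (m / (q * e)))
      rw [hS0]
      unfold Sint
      rw [← h1, hre, ← h2, hzero, zero_add, hfe]
    rw [hSsum]
    apply Finset.dvd_sum
    intro e he
    simp only [Finset.mem_filter, Nat.mem_divisors] at he
    obtain ⟨⟨hem, _⟩, hne⟩ := he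
    set K := m₂ / e with hK
    have hK0 : 0 < K := Nat.div_pos (Nat.le_of_dvd (Nat.pos_of_ne_zero hm₂0) hem) (by
      rcases Nat.eq_zero_or_pos e with rfl | h
      · exact absurd (zero_dvd_iff.mp hem) hm₂0
      · exact h)
    have hqK : m / e = q * K := by
      rw [hmeq, hK, Nat.mul_div_assoc q hem]
    have hqe : m / (q * e) = K := by
      rw [hmeq, hK, Nat.mul_div_mul_left _ _ hq.pos]
    have hco : Nat.Coprime q e := (hq.coprime_iff_not_dvd).mpr hne
    have hmu : (ArithmeticFunction.moebius (q * e) : ℤ) = - ArithmeticFunction.moebius e := by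
      rw [ArithmeticFunction.isMultiplicative_moebius.map_mul_of_coprime hco,
        ArithmeticFunction.moebius_apply_prime hq]
      ring
    rw [hmu, hqe, hqK]
    have hfact : (q * K).factorization q = a := by
      rw [← hqK, Nat.factorization_div (hem.trans ⟨q, by rw [hmeq]; ring⟩), Finsupp.tsub_apply,
        Nat.factorization_eq_zero_of_not_dvd hne, ha2, Nat.sub_zero]
    have hstep := step1 q K n hq hK0 hn
    rw [hfact] at hstep
    have heq2 : (- ArithmeticFunction.moebius e : ℤ) * hfun n K
          + (ArithmeticFunction.moebius e : ℤ) * hfun n (q * K)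
        = (ArithmeticFunction.moebius e) * (hfun n (q * K) - hfun n K) := by ring
    rw [heq2]
    exact hstep.mul_left _
  have habs : (m ^ 2 : ℕ) ∣ S.natAbs := by
    rw [Nat.dvd_iff_prime_pow_dvd_dvd]
    intro q c hq hqc
    have hqprime : q.Prime := hq
    by_cases hqm : q ∣ m
    · have hc2a : c ≤ 2 * m.factorization q := by
        have h := (Nat.Prime.pow_dvd_iff_le_factorization hqprime
          (pow_ne_zero 2 (by omega))).mp hqc
        rwa [Nat.factorization_pow, Finsupp.smul_apply, smul_eq_mul] at h
      have h1 : ((q : ℤ)) ^ (2 * m.factorization q) ∣ S := key q hqprime hqm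
      rw [← Int.natCast_dvd]
      calc ((q ^ c : ℕ) : ℤ) ∣ ((q ^ (2 * m.factorization q) : ℕ) : ℤ) :=
            Int.natCast_dvd_natCast.mpr (pow_dvd_pow q hc2a)
        _ ∣ S := by push_cast; exact h1
    · have hnd : ¬ q ∣ m ^ 2 := fun hd => hqm (hqprime.dvd_of_dvd_pow hd)
      have hc0 : c = 0 := by
        by_contra hc
        exact hnd (dvd_trans (dvd_pow_self q hc) hqc)
      simp [hc0]
  have : ((m ^ 2 : ℕ) : ℤ) ∣ S := Int.natCast_dvd.mpr habs
  push_cast at this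
  exact this

lemma Sint_eq (n m : ℕ) (hm : m ≠ 0) :
    Sint n m = ∑ k ∈ Iset m, ((-1 : ℤ)) ^ (omegaN (m / k)) * hfun n k := by
  unfold Sint
  have h1 : ∀ d ∈ m.divisors,
      (ArithmeticFunction.moebius d : ℤ) * hfun n (m / d)
        = (fun d => (ArithmeticFunction.moebius (m / d) : ℤ) * hfun n d) (m / d) := by
    intro d hd
    simp only
    rw [Nat.div_div_self (Nat.mem_divisors.mp hd).1 hm]
  rw [Finset.sum_congr rfl h1,
    Nat.sum_div_divisors m (fun d => (ArithmeticFunction.moebius (m / d) : ℤ) * hfun n d)]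
  have h2 : ∑ k ∈ Iset m, ((-1 : ℤ)) ^ (omegaN (m / k)) * hfun n k
      = ∑ k ∈ Iset m, (ArithmeticFunction.moebius (m / k) : ℤ) * hfun n k := by
    apply Finset.sum_congr rfl
    intro k hk
    simp only [Iset, Finset.mem_filter, Nat.mem_divisors] at hk
    obtain ⟨⟨hkm, _⟩, hsf⟩ := hk
    have hmk0 : m / k ≠ 0 := by
      have := Nat.div_pos (Nat.le_of_dvd (by omega) hkm)
        (by rcases Nat.eq_zero_or_pos k with rfl | h
            · exact absurd (zero_dvd_iff.mp hkm) hm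
            · exact h)
      omega
    have homega : omegaN (m / k) = ArithmeticFunction.cardFactors (m / k) := by
      rw [← (ArithmeticFunction.cardDistinctFactors_eq_cardFactors_iff_squarefree hmk0).mpr hsf,
        ArithmeticFunction.cardDistinctFactors_apply, omegaN, Nat.primeFactors,
        List.card_toFinset]
    congr 1
    rw [ArithmeticFunction.moebius_apply_of_squarefree hsf, homega]
  rw [h2]
  exact (Finset.sum_filter_of_ne (fun k hk hne => by
    by_contra hsf
    have hkm : k ∣ m := (Nat.mem_divisors.mp hk).1
    exact hne (by rw [ArithmeticFunction.moebius_eq_zero_of_not_squarefree hsf]; norm_num))).symm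

/-- The integer matrix entry. -/
def Cint (w s t : ℕ) : ℤ :=
  if t ∣ s then (-1) ^ (s * w) * (Sint (t * w) (s / t) / ((s / t : ℕ) : ℤ) ^ 2) else 0

lemma Cint_cast (w s t : ℕ) (hw : 2 ≤ w) (hs : 0 < s) (ht : 0 < t) :
    ((Cint w s t : ℤ) : ℚ) = Cmat w s t := by
  unfold Cint Cmat
  by_cases hts : t ∣ s
  · simp only [hts, if_true]
    set m := s / t with hm
    have hm0 : 0 < m := Nat.div_pos (Nat.le_of_dvd hs hts) ht
    have hn2 : 2 ≤ t * w := le_trans hw (Nat.le_mul_of_pos_left w ht)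
    have hdvd : (((m : ℕ) : ℤ)) ^ 2 ∣ Sint (t * w) m := step2 m (t * w) hm0 hn2
    rw [Int.cast_mul, Int.cast_div_charZero hdvd]
    have hsum : ((Sint (t * w) m : ℤ) : ℚ)
        = ∑ k ∈ Iset m,
            (-1 : ℚ) ^ (omegaN (s / (k * t))) * (-1 : ℚ) ^ (k * t * w) *
              (Nat.choose (k * (t * w - 1) - 1) (k - 1) : ℚ) := by
      rw [Sint_eq _ _ (by omega)]
      push_cast
      apply Finset.sum_congr rfl
      intro k hk
      have hdd : m / k = s / (k * t) := by
        rw [hm, Nat.div_div_eq_div_mul, mul_comm]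
      rw [hdd]
      unfold hfun
      push_cast
      rw [show k * (t * w) = k * t * w by ring]
      ring
    rw [hsum]
    push_cast
    ring
  · simp [hts]

lemma Cint_diag (w s : ℕ) (hs : 0 < s) : Cint w s s = 1 := by
  unfold Cint
  simp only [dvd_refl, if_true]
  rw [Nat.div_self hs]
  have h2 : Sint (s * w) 1 = (-1 : ℤ) ^ (s * w) := by
    unfold Sint
    rw [Nat.divisors_one]
    simp only [Finset.sum_singleton, Nat.div_self, ArithmeticFunction.moebius_apply_one]
    unfold hfun
    simp
  rw [h2, Nat.cast_one, one_pow, Int.ediv_one, ← pow_add]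
  exact Even.neg_one_pow ⟨s * w, rfl⟩

end CmatAux

theorem Cmat_invertible_integral_inverse (w : ℕ) (hw : 2 ≤ w) (N : ℕ) (hN : 0 < N) :
    IsUnit (Matrix.of fun i j : Fin N => Cmat w ((i : ℕ) + 1) ((j : ℕ) + 1)) ∧
      ∀ i j : Fin N,
        ∃ z : ℤ,
          (Matrix.of fun i j : Fin N => Cmat w ((i : ℕ) + 1) ((j : ℕ) + 1))⁻¹ i j = z := by
  classical
  set Mz : Matrix (Fin N) (Fin N) ℤ :=
    Matrix.of (fun i j : Fin N => CmatAux.Cint w ((i : ℕ) + 1) ((j : ℕ) + 1)) with hMz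
  have hmap : (Matrix.of fun i j : Fin N => Cmat w ((i : ℕ) + 1) ((j : ℕ) + 1))
      = (Int.castRingHom ℚ).mapMatrix Mz := by
    ext i j
    simp only [Matrix.of_apply, RingHom.mapMatrix_apply, Matrix.map_apply, hMz,
      Int.coe_castRingHom]
    exact (CmatAux.Cint_cast w _ _ hw (by omega) (by omega)).symm
  have htri : Mz.BlockTriangular OrderDual.toDual := by
    intro i j hij
    have hij' : i < j := hij
    have hnd : ¬ ((j : ℕ) + 1 ∣ (i : ℕ) + 1) := by
      intro hdvd
      have h1 := Nat.le_of_dvd (by omega) hdvd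
      have h2 : (i : ℕ) < (j : ℕ) := hij'
      omega
    simp [hMz, CmatAux.Cint, hnd]
  have hdet : Mz.det = 1 := by
    rw [Matrix.det_of_lowerTriangular Mz htri]
    have : ∀ i : Fin N, Mz i i = 1 := fun i => CmatAux.Cint_diag w _ (by omega)
    simp [this]
  have hdetq : (Matrix.of fun i j : Fin N => Cmat w ((i : ℕ) + 1) ((j : ℕ) + 1)).det = 1 := by
    rw [hmap, ← RingHom.map_det, hdet]
    simp
  constructor
  · rw [Matrix.isUnit_iff_isUnit_det, hdetq]
    exact isUnit_one
  · intro i j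
    refine ⟨Mz.adjugate i j, ?_⟩
    have hinv : (Matrix.of fun i j : Fin N => Cmat w ((i : ℕ) + 1) ((j : ℕ) + 1))⁻¹
        = (Matrix.of fun i j : Fin N => Cmat w ((i : ℕ) + 1) ((j : ℕ) + 1)).adjugate := by
      rw [Matrix.inv_def, hdetq, Ring.inverse_one, one_smul]
    rw [hinv, hmap, ← RingHom.map_adjugate]
    simp
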